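/- Let f_{λ,ε}(X) = min over z with z_{Ω_j} ∈ R_ε(y^{(j)}) for all j of [λ‖X‖_* + (1/2)‖z − P_Ω(X)‖₂²]. Then for all γ > 0 and all X, f_{λ,γε}(X) = γ² f_{γ⁻¹λ, ε}(X/γ). Consequently, X minimizes f_{λ,γε} if and only if X/γ minimizes f_{γ⁻¹λ,ε}. -/

import Mathlib

open scoped BigOperators
open scoped Pointwise Matrix

open Polynomial in
lemma charpoly_conj' {n R : Type*} [Fintype n] [DecidableEq n] [CommRing R]
    (U V B : Matrix n n R) (hUV : U * V = 1) :
    (U * B * V).charpoly = B.charpoly := by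
  have hmap : (U.map C) * (V.map C) = 1 := by
    rw [← Matrix.map_mul, hUV, Matrix.map_one _ (map_zero C) (map_one C)]
  have hcomm : ∀ M : Matrix n n R[X],
      M * Matrix.scalar n (X : R[X]) = Matrix.scalar n (X : R[X]) * M :=
    fun M => (Matrix.scalar_commute (X : R[X]) (fun r => Commute.all _ _) M).symm
  have key : Matrix.charmatrix (U * B * V) = (U.map C) * Matrix.charmatrix B * (V.map C) := by
    rw [Matrix.charmatrix, Matrix.charmatrix, RingHom.mapMatrix_apply, RingHom.mapMatrix_apply,
      mul_sub, sub_mul, ← Matrix.map_mul, ← Matrix.map_mul]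
    congr 1
    rw [mul_assoc, ← hcomm, ← mul_assoc, hmap, one_mul]
  rw [Matrix.charpoly, key, Matrix.det_mul, Matrix.det_mul, mul_comm, ← mul_assoc,
    mul_comm (V.map C).det, ← Matrix.det_mul, hmap, Matrix.det_one, one_mul]
  rfl

open Polynomial in
lemma charpoly_diagonal' {n R : Type*} [Fintype n] [DecidableEq n] [CommRing R] (d : n → R) :
    (Matrix.diagonal d).charpoly = ∏ i, (X - C (d i)) := by
  have : Matrix.charmatrix (Matrix.diagonal d) = Matrix.diagonal fun i => X - C (d i) := by
    ext i j
    by_cases h : i = j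
    · subst h; simp [Matrix.charmatrix_apply_eq]
    · simp [Matrix.charmatrix_apply_ne _ _ _ h, Matrix.diagonal_apply_ne _ h]
  rw [Matrix.charpoly, this, Matrix.det_diagonal]

open Polynomial in
lemma charpoly_smul_hermitian {n : Type*} [Fintype n] [DecidableEq n]
    {A : Matrix n n ℝ} (hA : A.IsHermitian) (c : ℝ) :
    (c • A).charpoly = ∏ i, (X - C (c * hA.eigenvalues i)) := by
  set U : Matrix n n ℝ := (Matrix.IsHermitian.eigenvectorUnitary hA : Matrix n n ℝ)
  have hU : U * star U = 1 :=
    (Matrix.mem_unitaryGroup_iff).mp (Matrix.IsHermitian.eigenvectorUnitary hA).2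
  have h1 : c • A = U * (Matrix.diagonal fun i => c * hA.eigenvalues i) * star U := by
    have := hA.spectral_theorem
    rw [Unitary.conjStarAlgAut_apply] at this
    rw [show (Matrix.diagonal fun i => c * hA.eigenvalues i)
        = c • Matrix.diagonal (RCLike.ofReal ∘ hA.eigenvalues) by
        rw [← Matrix.diagonal_smul]; congr 1]
    rw [Matrix.mul_smul, Matrix.smul_mul, ← this]
  rw [h1, charpoly_conj' _ _ _ hU, charpoly_diagonal']

open Polynomial in
lemma eig_multiset {n : Type*} [Fintype n] [DecidableEq n]
    {A : Matrix n n ℝ} (hA : A.IsHermitian) (c : ℝ) (hcA : (c • A).IsHermitian) :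
    Finset.univ.val.map hcA.eigenvalues
      = Finset.univ.val.map (fun i => c * hA.eigenvalues i) := by
  have h1 : (c • A).charpoly = ∏ i, (X - C (c * hA.eigenvalues i)) := charpoly_smul_hermitian hA c
  have h2 : (c • A).charpoly = ∏ i, (X - C (1 * hcA.eigenvalues i)) := by
    simpa using charpoly_smul_hermitian hcA 1
  have key : ((Finset.univ.val.map fun i => c * hA.eigenvalues i).map fun a => X - C a).prod
      = ((Finset.univ.val.map fun i => (1:ℝ) * hcA.eigenvalues i).map fun a => X - C a).prod := by
    rw [Multiset.map_map, Multiset.map_map]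
    rw [show ((fun a => X - C a) ∘ fun i => c * hA.eigenvalues i)
        = fun i => X - C (c * hA.eigenvalues i) from rfl]
    rw [show ((fun a => X - C a) ∘ fun i => (1:ℝ) * hcA.eigenvalues i)
        = fun i => X - C ((1:ℝ) * hcA.eigenvalues i) from rfl]
    rw [← Finset.prod_eq_multiset_prod, ← Finset.prod_eq_multiset_prod, ← h1, ← h2]
  have := congrArg Polynomial.roots key
  rw [Polynomial.roots_multiset_prod_X_sub_C, Polynomial.roots_multiset_prod_X_sub_C] at this
  simpa using this.symm

/-- The nuclear norm (sum of singular values) of a real matrix. -/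
noncomputable def nuclearNorm {d₁ d₂ : ℕ} (X : Matrix (Fin d₁) (Fin d₂) ℝ) : ℝ :=
  ∑ i, Real.sqrt ((Matrix.isHermitian_conjTranspose_mul_self X).eigenvalues i)

lemma sum_sqrt_eig_congr {n : Type*} [Fintype n] [DecidableEq n]
    {A B : Matrix n n ℝ} (h : A = B) (hA : A.IsHermitian) (hB : B.IsHermitian) :
    ∑ i, Real.sqrt (hA.eigenvalues i) = ∑ i, Real.sqrt (hB.eigenvalues i) := by subst h; rfl

lemma nuclearNorm_smul {d₁ d₂ : ℕ} (X : Matrix (Fin d₁) (Fin d₂) ℝ) (c : ℝ) (hc : 0 ≤ c) :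
    nuclearNorm (c • X) = c * nuclearNorm X := by
  have hM : ((c • X)ᴴ * (c • X)) = (c ^ 2) • (Xᴴ * X) := by
    rw [Matrix.conjTranspose_smul, Matrix.smul_mul, Matrix.mul_smul, smul_smul]
    norm_num [sq]
  have hA : (Xᴴ * X).IsHermitian := Matrix.isHermitian_conjTranspose_mul_self X
  have hcA : ((c ^ 2) • (Xᴴ * X)).IsHermitian := hM ▸ Matrix.isHermitian_conjTranspose_mul_self (c • X)
  rw [nuclearNorm, sum_sqrt_eig_congr hM _ hcA]
  have hmult := eig_multiset hA (c ^ 2) hcA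
  have : ∑ i, Real.sqrt (hcA.eigenvalues i)
      = ((Finset.univ.val.map hcA.eigenvalues).map Real.sqrt).sum := by
    rw [Multiset.map_map, Finset.sum_eq_multiset_sum]; rfl
  rw [this, hmult, Multiset.map_map, nuclearNorm, Finset.mul_sum]
  rw [Finset.sum_eq_multiset_sum]
  congr 1
  apply Multiset.map_congr rfl
  intro i _
  show Real.sqrt (c ^ 2 * hA.eigenvalues i) = c * Real.sqrt (hA.eigenvalues i)
  rw [Real.sqrt_mul (sq_nonneg c), Real.sqrt_sq hc]

/-- The objective `f_{λ,ε}(X)`: the infimum over retargeted scores `z` respecting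
the ε-margin ranking constraints (within each column, as recorded by the
observed index list `Ω` and scores `y`) of
`λ‖X‖_* + (1/2)‖z − P_Ω(X)‖₂²`. -/
noncomputable def retargetedObjective {d₁ d₂ m : ℕ}
    (Ω : Fin m → Fin d₁ × Fin d₂) (y : Fin m → ℝ) (lam ε : ℝ)
    (X : Matrix (Fin d₁) (Fin d₂) ℝ) : ℝ :=
  sInf {v : ℝ | ∃ z : Fin m → ℝ,
    (∀ s t : Fin m, (Ω s).2 = (Ω t).2 → y s < y t → z s ≤ z t - ε) ∧
    v = lam * nuclearNorm X + (1 / 2) * ∑ s, (z s - X (Ω s).1 (Ω s).2) ^ 2}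

/-- Proposition 1 of the paper: `f_{λ,γε}(X) = γ² f_{γ⁻¹λ,ε}(X/γ)`,
hence `X` minimizes `f_{λ,γε}` iff `X/γ` minimizes `f_{γ⁻¹λ,ε}`. -/
theorem retargeted_objective_scaling {d₁ d₂ m : ℕ}
    (Ω : Fin m → Fin d₁ × Fin d₂) (y : Fin m → ℝ) (lam ε : ℝ)
    (hlam : 0 < lam) (hε : 0 < ε) (γ : ℝ) (hγ : 0 < γ) :
    (∀ X : Matrix (Fin d₁) (Fin d₂) ℝ,
        retargetedObjective Ω y lam (γ * ε) X
          = γ ^ 2 * retargetedObjective Ω y (γ⁻¹ * lam) ε (γ⁻¹ • X)) ∧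
    ∀ X : Matrix (Fin d₁) (Fin d₂) ℝ,
      (∀ X', retargetedObjective Ω y lam (γ * ε) X
          ≤ retargetedObjective Ω y lam (γ * ε) X') ↔
        (∀ X', retargetedObjective Ω y (γ⁻¹ * lam) ε (γ⁻¹ • X)
          ≤ retargetedObjective Ω y (γ⁻¹ * lam) ε X') := by
  have hγ0 : γ ≠ 0 := ne_of_gt hγ
  have hγ2 : (0:ℝ) ≤ γ ^ 2 := sq_nonneg γ
  have main : ∀ X : Matrix (Fin d₁) (Fin d₂) ℝ,
      retargetedObjective Ω y lam (γ * ε) X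
        = γ ^ 2 * retargetedObjective Ω y (γ⁻¹ * lam) ε (γ⁻¹ • X) := by
    intro X
    have hN : nuclearNorm (γ⁻¹ • X) = γ⁻¹ * nuclearNorm X :=
      nuclearNorm_smul X γ⁻¹ (inv_nonneg.mpr (le_of_lt hγ))
    have hset : {v : ℝ | ∃ z : Fin m → ℝ,
        (∀ s t : Fin m, (Ω s).2 = (Ω t).2 → y s < y t → z s ≤ z t - (γ * ε)) ∧
        v = lam * nuclearNorm X + (1 / 2) * ∑ s, (z s - X (Ω s).1 (Ω s).2) ^ 2}
        = (γ ^ 2) • {v : ℝ | ∃ z : Fin m → ℝ,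
        (∀ s t : Fin m, (Ω s).2 = (Ω t).2 → y s < y t → z s ≤ z t - ε) ∧
        v = (γ⁻¹ * lam) * nuclearNorm (γ⁻¹ • X)
          + (1 / 2) * ∑ s, (z s - (γ⁻¹ • X) (Ω s).1 (Ω s).2) ^ 2} := by
      ext v
      constructor
      · rintro ⟨z, hz, rfl⟩
        refine Set.mem_smul_set.mpr
          ⟨(γ⁻¹ * lam) * nuclearNorm (γ⁻¹ • X)
            + (1 / 2) * ∑ s, ((γ⁻¹ * z s) - (γ⁻¹ • X) (Ω s).1 (Ω s).2) ^ 2,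
          ⟨fun s => γ⁻¹ * z s, ?_, rfl⟩, ?_⟩
        · intro s t h1 h2
          have h3 := hz s t h1 h2
          have h4 := mul_le_mul_of_nonneg_left h3 (inv_nonneg.mpr (le_of_lt hγ))
          have h5 : γ⁻¹ * (z t - γ * ε) = γ⁻¹ * z t - ε := by field_simp
          linarith [h4, h5.le, h5.ge]
        · have hsum : ∑ s, ((γ⁻¹ * z s) - (γ⁻¹ • X) (Ω s).1 (Ω s).2) ^ 2
              = γ⁻¹ ^ 2 * ∑ s, (z s - X (Ω s).1 (Ω s).2) ^ 2 := by
            rw [Finset.mul_sum]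
            refine Finset.sum_congr rfl fun s _ => ?_
            simp only [Matrix.smul_apply, smul_eq_mul]
            ring
          rw [smul_eq_mul, hsum, hN]
          field_simp
      · rintro hv
        obtain ⟨w, ⟨z, hz, rfl⟩, rfl⟩ := Set.mem_smul_set.mp hv
        refine ⟨fun s => γ * z s, ?_, ?_⟩
        · intro s t h1 h2
          have h3 := hz s t h1 h2
          have h4 := mul_le_mul_of_nonneg_left h3 (le_of_lt hγ)
          have h5 : γ * (z t - ε) = γ * z t - γ * ε := by ring
          show γ * z s ≤ γ * z t - γ * ε
          linarith [h4, h5.le, h5.ge]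
        · have hsum : ∑ s, ((γ * z s) - X (Ω s).1 (Ω s).2) ^ 2
              = γ ^ 2 * ∑ s, (z s - (γ⁻¹ • X) (Ω s).1 (Ω s).2) ^ 2 := by
            rw [Finset.mul_sum]
            refine Finset.sum_congr rfl fun s _ => ?_
            simp only [Matrix.smul_apply, smul_eq_mul]
            field_simp
          rw [smul_eq_mul, hsum, hN]
          field_simp
    rw [retargetedObjective, retargetedObjective, hset,
      Real.sInf_smul_of_nonneg hγ2, smul_eq_mul]
  refine ⟨main, fun X => ?_⟩
  constructor
  · intro h X'
    have h1 : retargetedObjective Ω y lam (γ * ε) X ≤ retargetedObjective Ω y lam (γ * ε) (γ • X') :=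
      h _
    have h2 := main X
    have h3 := main (γ • X')
    have h4 : γ⁻¹ • γ • X' = X' := by
      rw [smul_smul, inv_mul_cancel₀ hγ0, one_smul]
    rw [h2, h3, h4] at h1
    have hγ2' : (0:ℝ) < γ ^ 2 := by positivity
    exact le_of_mul_le_mul_left h1 hγ2'
  · intro h X'
    have h1 : retargetedObjective Ω y (γ⁻¹ * lam) ε (γ⁻¹ • X)
        ≤ retargetedObjective Ω y (γ⁻¹ * lam) ε (γ⁻¹ • X') := h _
    rw [main X, main X']
    exact mul_le_mul_of_nonneg_left h1 hγ2
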